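/- If a relation R on a finite set is acyclic (its transitive closure is irreflexive), then R extends to a strict linear order; consequently any history whose combined real-time/return-value-from/multi-version graph is acyclic has an equivalent serial order respecting all three relations. -/

import Mathlib

/-- Order-extension principle: if a relation `R` on a finite set is acyclic
(its transitive closure is irreflexive), then `R` extends to a strict total
(linear) order; topologically sorting the acyclic opacity graph yields an
equivalent serial order respecting all the relations. -/
theorem stmt_19 (V : Type) [Fintype V] (R : V → V → Prop)
    (hacyc : Irreflexive (Relation.TransGen R)) :
    ∃ r : V → V → Prop, IsStrictTotalOrder V r ∧ ∀ u v, R u v → r u v := by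
  set p : V → V → Prop := fun a b => a = b ∨ Relation.TransGen R a b with hp
  haveI : IsPartialOrder V p := by
    refine { refl := ?_, trans := ?_, antisymm := ?_ }
    · intro a; exact Or.inl rfl
    · rintro a b c (rfl | hab) (rfl | hbc)
      · exact Or.inl rfl
      · exact Or.inr hbc
      · exact Or.inr hab
      · exact Or.inr (hab.trans hbc)
    · rintro a b (rfl | hab) (h | hba)
      · rfl
      · rfl
      · exact h.symm
      · exact absurd (hab.trans hba) (hacyc a)
  obtain ⟨s, hs, hps⟩ := extend_partialOrder p
  refine ⟨fun a b => s a b ∧ a ≠ b, ?_, ?_⟩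
  · refine { trichotomous := ?_, irrefl := ?_, trans := ?_ }
    · intro a b
      rcases eq_or_ne a b with rfl | hne
      · exact fun _ _ => rfl
      · rcases hs.total a b with h | h
        · exact fun h1 _ => (h1 ⟨h, hne⟩).elim
        · exact fun _ h2 => (h2 ⟨h, hne.symm⟩).elim
    · intro a h; exact h.2 rfl
    · rintro a b c ⟨hab, hne1⟩ ⟨hbc, hne2⟩
      refine ⟨hs.trans _ _ _ hab hbc, ?_⟩
      rintro rfl
      exact hne1 (hs.antisymm _ _ hab hbc)
  · intro u v huv
    have hne : u ≠ v := by
      rintro rfl; exact hacyc u (Relation.TransGen.single huv)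
    exact ⟨hps u v (Or.inr (Relation.TransGen.single huv)), hne⟩
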